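/- Suppose each f_j is twice continuously differentiable with ∇²f_j(x) positive definite for all x, and α^1 = 1. Then during the first cycle of the IN method, for each i = 1,…,m, the iterate x_{i+1}^1 is the unique minimizer over x ∈ ℝ^n of Σ_{j=1}^i f̂_j(x, x_j^1), where f̂_j(x, y) = f_j(y) + ∇f_j(y)ᵀ(x − y) + (1/2)(x − y)ᵀ∇²f_j(y)(x − y) is the second-order Taylor approximation of f_j at y. -/

import Mathlib

open Finset Filter Classical

lemma aux_symm {n : ℕ} (A : Matrix (Fin n) (Fin n) ℝ) (hA : A.IsHermitian)
    (u v : EuclideanSpace ℝ (Fin n)) :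
    (inner ℝ u ((Matrix.toEuclideanCLM (𝕜 := ℝ) A) v) : ℝ)
      = (inner ℝ ((Matrix.toEuclideanCLM (𝕜 := ℝ) A) u) v : ℝ) :=
  ((Matrix.isHermitian_iff_isSymmetric.mp hA) u v).symm

lemma aux_pos {n : ℕ} (A : Matrix (Fin n) (Fin n) ℝ) (hA : A.PosDef)
    (d : EuclideanSpace ℝ (Fin n)) (hd : d ≠ 0) :
    0 < (inner ℝ d ((Matrix.toEuclideanCLM (𝕜 := ℝ) A) d) : ℝ) := by
  have hd' : (WithLp.equiv 2 (Fin n → ℝ)) d ≠ 0 := by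
    intro h; exact hd ((WithLp.equiv 2 (Fin n → ℝ)).injective (by simpa using h))
  have := hA.dotProduct_mulVec_pos hd'
  rw [EuclideanSpace.inner_eq_star_dotProduct, Matrix.ofLp_toEuclideanCLM, dotProduct_comm]
  simpa using this

lemma aux_cancel {n : ℕ} (M : Matrix (Fin n) (Fin n) ℝ) (hM : M.PosDef)
    (v : EuclideanSpace ℝ (Fin n)) :
    (Matrix.toEuclideanCLM (𝕜 := ℝ) M) ((Matrix.toEuclideanCLM (𝕜 := ℝ) M⁻¹) v) = v := by
  have h1 : M * M⁻¹ = 1 :=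
    Matrix.mul_nonsing_inv _ ((Matrix.isUnit_iff_isUnit_det _).mp hM.isUnit)
  have h2 : (Matrix.toEuclideanCLM (𝕜 := ℝ) M) * (Matrix.toEuclideanCLM (𝕜 := ℝ) M⁻¹) = 1 := by
    rw [← map_mul, h1, map_one]
  calc (Matrix.toEuclideanCLM (𝕜 := ℝ) M) ((Matrix.toEuclideanCLM (𝕜 := ℝ) M⁻¹) v)
      = ((Matrix.toEuclideanCLM (𝕜 := ℝ) M) * (Matrix.toEuclideanCLM (𝕜 := ℝ) M⁻¹)) v := rfl
    _ = v := by rw [h2]; rfl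

lemma aux_term {n : ℕ} (A : Matrix (Fin n) (Fin n) ℝ) (hA : A.IsHermitian)
    (gj xj z y : EuclideanSpace ℝ (Fin n)) (c : ℝ) :
    c + (inner ℝ gj (y - xj) : ℝ)
      + (1/2) * (inner ℝ (y - xj) ((Matrix.toEuclideanCLM (𝕜 := ℝ) A) (y - xj)) : ℝ)
    = (c + (inner ℝ gj (z - xj) : ℝ)
        + (1/2) * (inner ℝ (z - xj) ((Matrix.toEuclideanCLM (𝕜 := ℝ) A) (z - xj)) : ℝ))
      + ((inner ℝ (y - z) (gj + (Matrix.toEuclideanCLM (𝕜 := ℝ) A) (z - xj)) : ℝ)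
        + (1/2) * (inner ℝ (y - z) ((Matrix.toEuclideanCLM (𝕜 := ℝ) A) (y - z)) : ℝ)) := by
  have hy : y - xj = (y - z) + (z - xj) := by abel
  rw [hy, map_add, inner_add_left, inner_add_right, inner_add_right, inner_add_right,
    inner_add_right]
  have hsym : (inner ℝ (z - xj) ((Matrix.toEuclideanCLM (𝕜 := ℝ) A) (y - z)) : ℝ)
      = (inner ℝ (y - z) ((Matrix.toEuclideanCLM (𝕜 := ℝ) A) (z - xj)) : ℝ) := by
    rw [aux_symm _ hA, real_inner_comm]
  rw [hsym, real_inner_comm gj (y - z)]; ring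

noncomputable def taylorSum (n : ℕ) (f : ℕ → EuclideanSpace ℝ (Fin n) → ℝ)
    (g : ℕ → EuclideanSpace ℝ (Fin n) → EuclideanSpace ℝ (Fin n))
    (hess : ℕ → EuclideanSpace ℝ (Fin n) → Matrix (Fin n) (Fin n) ℝ)
    (xc : ℕ → EuclideanSpace ℝ (Fin n)) (i : ℕ) (y : EuclideanSpace ℝ (Fin n)) : ℝ :=
  ∑ j ∈ Finset.Icc 1 i,
    (f j (xc j) + (inner ℝ (g j (xc j)) (y - xc j) : ℝ)
      + (1/2) * (inner ℝ (y - xc j) ((Matrix.toEuclideanCLM (𝕜 := ℝ) (hess j (xc j))) (y - xc j)) : ℝ))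

theorem statement13
    (n m : ℕ) (hm : 1 < m)
    (f : ℕ → EuclideanSpace ℝ (Fin n) → ℝ)
    (g : ℕ → EuclideanSpace ℝ (Fin n) → EuclideanSpace ℝ (Fin n))
    (hess : ℕ → EuclideanSpace ℝ (Fin n) → Matrix (Fin n) (Fin n) ℝ)
    (hgrad : ∀ i ∈ Finset.Icc 1 m, ∀ y, HasGradientAt (f i) (g i y) y)
    (hhess : ∀ i ∈ Finset.Icc 1 m, ∀ y, HasFDerivAt (g i) (Matrix.toEuclideanCLM (𝕜 := ℝ) (hess i y)) y)
    (hcont : ∀ i ∈ Finset.Icc 1 m, Continuous (hess i))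
    (α : ℕ → ℝ) (hα : ∀ k, 1 ≤ k → 0 < α k)
    (x : ℕ → ℕ → EuclideanSpace ℝ (Fin n))
    (H : ℕ → ℕ → Matrix (Fin n) (Fin n) ℝ)
    (hH0 : H 1 0 = 0)
    (hHnext : ∀ k, 1 ≤ k → H (k+1) 0 = H k m)
    (hHrec : ∀ k, 1 ≤ k → ∀ i ∈ Finset.Icc 1 m, H k i = H k (i-1) + hess i (x k i))
    (hxnext : ∀ k, 1 ≤ k → x (k+1) 1 = x k (m+1))
    (hiter : ∀ k, 1 ≤ k → ∀ i ∈ Finset.Icc 1 m,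
      x k (i+1) = x k i - α k • (Matrix.toEuclideanCLM (𝕜 := ℝ) (H k i)⁻¹) (g i (x k i)))
    (hpd : ∀ i ∈ Finset.Icc 1 m, ∀ y, (hess i y).PosDef)
    (hα1 : α 1 = 1) :
    ∀ i ∈ Finset.Icc 1 m,
      (∀ y, taylorSum n f g hess (fun j => x 1 j) i (x 1 (i+1))
          ≤ taylorSum n f g hess (fun j => x 1 j) i y) ∧
      (∀ z, (∀ y, taylorSum n f g hess (fun j => x 1 j) i z
          ≤ taylorSum n f g hess (fun j => x 1 j) i y) → z = x 1 (i+1)) := by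
  -- key structural facts about the first cycle
  have key : ∀ i, 1 ≤ i → i ≤ m →
      (H 1 i = ∑ j ∈ Finset.Icc 1 i, hess j (x 1 j)) ∧
      ((Matrix.toEuclideanCLM (𝕜 := ℝ) (H 1 i)) (x 1 (i+1))
        = ∑ j ∈ Finset.Icc 1 i,
            ((Matrix.toEuclideanCLM (𝕜 := ℝ) (hess j (x 1 j))) (x 1 j) - g j (x 1 j))) := by
    intro i hi
    induction i, hi using Nat.le_induction with
    | base =>
      intro him
      have hH1 : H 1 1 = hess 1 (x 1 1) := by
        have := hHrec 1 le_rfl 1 (by simp [Finset.mem_Icc]; omega)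
        simpa [hH0] using this
      have hpd1 : (H 1 1).PosDef := by rw [hH1]; exact hpd 1 (by simp [Finset.mem_Icc]; omega) _
      have hit := hiter 1 le_rfl 1 (by simp [Finset.mem_Icc]; omega)
      rw [hα1, one_smul] at hit
      constructor
      · simpa using hH1
      · rw [hit, map_sub, aux_cancel _ hpd1]
        simp [hH1]
    | succ i hi ih =>
      intro him
      have him' : i ≤ m := by omega
      obtain ⟨ihH, ihx⟩ := ih him'
      have hmem : i + 1 ∈ Finset.Icc 1 m := by simp [Finset.mem_Icc]; omega
      have hH1 : H 1 (i+1) = H 1 i + hess (i+1) (x 1 (i+1)) := by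
        have := hHrec 1 le_rfl (i+1) hmem
        simpa using this
      have hpdH : (H 1 (i+1)).PosDef := by
        rw [hH1, ihH, ← Finset.sum_Icc_succ_top (by omega : 1 ≤ i + 1)]
        have : ∀ k, 1 ≤ k → k ≤ i + 1 → (∑ j ∈ Finset.Icc 1 k, hess j (x 1 j)).PosDef := by
          intro k hk
          induction k, hk using Nat.le_induction with
          | base => intro _; simpa using hpd 1 (by simp [Finset.mem_Icc]; omega) _
          | succ k hk ih2 =>
            intro hk1
            rw [Finset.sum_Icc_succ_top (by omega : 1 ≤ k + 1)]
            exact (ih2 (by omega)).add (hpd (k+1) (by simp [Finset.mem_Icc]; omega) _)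
        exact this (i+1) (by omega) le_rfl
      have hit := hiter 1 le_rfl (i+1) hmem
      rw [hα1, one_smul] at hit
      constructor
      · rw [hH1, ihH, Finset.sum_Icc_succ_top (by omega : 1 ≤ i + 1)]
      · rw [hit, map_sub, aux_cancel _ hpdH,
          Finset.sum_Icc_succ_top (by omega : 1 ≤ i + 1), ← ihx]
        have : (Matrix.toEuclideanCLM (𝕜 := ℝ) (H 1 (i+1))) (x 1 (i+1))
            = (Matrix.toEuclideanCLM (𝕜 := ℝ) (H 1 i)) (x 1 (i+1))
              + (Matrix.toEuclideanCLM (𝕜 := ℝ) (hess (i+1) (x 1 (i+1)))) (x 1 (i+1)) := by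
          rw [hH1, map_add]; rfl
        rw [this]; abel
  intro i hi
  rw [Finset.mem_Icc] at hi
  obtain ⟨hi1, him⟩ := hi
  obtain ⟨hHsum, hHx⟩ := key i hi1 him
  have hpdH : (H 1 i).PosDef := by
    rw [hHsum]
    have : ∀ k, 1 ≤ k → k ≤ i → (∑ j ∈ Finset.Icc 1 k, hess j (x 1 j)).PosDef := by
      intro k hk
      induction k, hk using Nat.le_induction with
      | base => intro _; simpa using hpd 1 (by simp [Finset.mem_Icc]; omega) _
      | succ k hk ih2 =>
        intro hk1
        rw [Finset.sum_Icc_succ_top (by omega : 1 ≤ k + 1)]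
        exact (ih2 (by omega)).add (hpd (k+1) (by simp [Finset.mem_Icc]; omega) _)
    exact this i hi1 le_rfl
  set z := x 1 (i+1) with hz
  -- expansion of the Taylor sum around z
  have expand : ∀ y, taylorSum n f g hess (fun j => x 1 j) i y
      = taylorSum n f g hess (fun j => x 1 j) i z
        + (1/2) * (inner ℝ (y - z) ((Matrix.toEuclideanCLM (𝕜 := ℝ) (H 1 i)) (y - z)) : ℝ) := by
    intro y
    unfold taylorSum
    have hterm : ∀ j ∈ Finset.Icc 1 i,
        (f j (x 1 j) + (inner ℝ (g j (x 1 j)) (y - x 1 j) : ℝ)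
          + (1/2) * (inner ℝ (y - x 1 j)
              ((Matrix.toEuclideanCLM (𝕜 := ℝ) (hess j (x 1 j))) (y - x 1 j)) : ℝ))
        = (f j (x 1 j) + (inner ℝ (g j (x 1 j)) (z - x 1 j) : ℝ)
            + (1/2) * (inner ℝ (z - x 1 j)
                ((Matrix.toEuclideanCLM (𝕜 := ℝ) (hess j (x 1 j))) (z - x 1 j)) : ℝ))
          + ((inner ℝ (y - z) (g j (x 1 j)
                + (Matrix.toEuclideanCLM (𝕜 := ℝ) (hess j (x 1 j))) (z - x 1 j)) : ℝ)
            + (1/2) * (inner ℝ (y - z)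
                ((Matrix.toEuclideanCLM (𝕜 := ℝ) (hess j (x 1 j))) (y - z)) : ℝ)) := by
      intro j hj
      rw [Finset.mem_Icc] at hj
      exact aux_term _ (hpd j (by simp [Finset.mem_Icc]; omega) _).isHermitian _ _ _ _ _
    rw [Finset.sum_congr rfl hterm, Finset.sum_add_distrib, Finset.sum_add_distrib,
      Finset.sum_add_distrib, Finset.sum_add_distrib]
    have h1 : ∑ j ∈ Finset.Icc 1 i,
        (inner ℝ (y - z) (g j (x 1 j)
          + (Matrix.toEuclideanCLM (𝕜 := ℝ) (hess j (x 1 j))) (z - x 1 j)) : ℝ) = 0 := by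
      rw [← inner_sum]
      have hvec : ∑ j ∈ Finset.Icc 1 i,
          (g j (x 1 j) + (Matrix.toEuclideanCLM (𝕜 := ℝ) (hess j (x 1 j))) (z - x 1 j)) = 0 := by
        have hsz : ∑ j ∈ Finset.Icc 1 i,
            (Matrix.toEuclideanCLM (𝕜 := ℝ) (hess j (x 1 j))) z
            = (Matrix.toEuclideanCLM (𝕜 := ℝ) (H 1 i)) z := by
          rw [hHsum, map_sum]
          simp [ContinuousLinearMap.sum_apply]
        simp only [map_sub, Finset.sum_add_distrib, Finset.sum_sub_distrib, hsz, hHx]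
        abel
      rw [hvec, inner_zero_right]
    have h2 : ∑ j ∈ Finset.Icc 1 i,
        (1/2) * (inner ℝ (y - z)
          ((Matrix.toEuclideanCLM (𝕜 := ℝ) (hess j (x 1 j))) (y - z)) : ℝ)
        = (1/2) * (inner ℝ (y - z) ((Matrix.toEuclideanCLM (𝕜 := ℝ) (H 1 i)) (y - z)) : ℝ) := by
      rw [← Finset.mul_sum, ← inner_sum]
      congr 2
      rw [hHsum, map_sum]
      simp [ContinuousLinearMap.sum_apply]
    rw [h1, h2]
    ring
  constructor
  · intro y
    rw [expand y]
    have hnn : 0 ≤ (inner ℝ (y - z) ((Matrix.toEuclideanCLM (𝕜 := ℝ) (H 1 i)) (y - z)) : ℝ) := by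
      by_cases hyz : y = z
      · simp [hyz]
      · exact le_of_lt (aux_pos _ hpdH _ (sub_ne_zero.mpr hyz))
    linarith
  · intro z' hz'
    have h1 := hz' z
    rw [expand z'] at h1
    have h2 : (inner ℝ (z' - z) ((Matrix.toEuclideanCLM (𝕜 := ℝ) (H 1 i)) (z' - z)) : ℝ) ≤ 0 := by
      linarith
    by_contra hne
    exact absurd h2 (not_le.mpr (aux_pos _ hpdH _ (sub_ne_zero.mpr hne)))
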